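/- Let n > 2, let 1 < p < ∞, and let s ∈ Δₙ be a point of the (closed) probability simplex. Then ‖Diag(s) − s sᵀ‖_p = 1/2 if and only if s is a permutation of the vector (1/2, 1/2, 0, …, 0), i.e., there exist distinct indices i, j with s_i = s_j = 1/2 and all other coordinates zero. -/

import Mathlib

open scoped ENNReal BigOperators

/-- The softmax function with inverse temperature `lam`. -/
noncomputable def softmax {n : ℕ} (lam : ℝ) (x : Fin n → ℝ) : Fin n → ℝ :=
  fun i => Real.exp (lam * x i) / ∑ j, Real.exp (lam * x j)

/-- The ℓ_p norm on `Fin n → ℝ`, for `p ∈ [1, ∞]`. -/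
noncomputable def lpNorm {n : ℕ} (p : ℝ≥0∞) (x : Fin n → ℝ) : ℝ :=
  if p = ⊤ then ⨆ i, |x i| else (∑ i, |x i| ^ p.toReal) ^ (1 / p.toReal)

/-- The ℓ_p-induced operator norm of a matrix. -/
noncomputable def opNorm {n m : ℕ} (p : ℝ≥0∞) (A : Matrix (Fin n) (Fin m) ℝ) : ℝ :=
  ⨆ v : {v : Fin m → ℝ // v ≠ 0}, lpNorm p (A.mulVec v.val) / lpNorm p v.val

/-- The matrix `Diag(s) - s sᵀ` (Jacobian of softmax with `lam = 1` at a point with value `s`). -/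
noncomputable def softmaxJac {n : ℕ} (s : Fin n → ℝ) : Matrix (Fin n) (Fin n) ℝ :=
  Matrix.diagonal s - Matrix.vecMulVec s s

/-- The open (interior of the) probability simplex. -/
def openSimplex (n : ℕ) : Set (Fin n → ℝ) :=
  {u | (∀ i, 0 < u i) ∧ ∑ i, u i = 1}

/-- The (closed) probability simplex. -/
def probSimplex (n : ℕ) : Set (Fin n → ℝ) :=
  {u | (∀ i, 0 ≤ u i) ∧ ∑ i, u i = 1}
section aux
open Finset

private lemma jensen_aux {n : ℕ} (w x : Fin n → ℝ) (hw : ∀ j, 0 ≤ w j) (hx : ∀ j, 0 ≤ x j)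
    {pr : ℝ} (hpr : 1 ≤ pr) :
    (∑ j, w j * x j) ^ pr ≤ (∑ j, w j) ^ (pr - 1) * ∑ j, w j * x j ^ pr := by
  have hprne : pr ≠ 0 := by linarith
  have hW : 0 ≤ ∑ j, w j := Finset.sum_nonneg fun j _ => hw j
  rcases hW.eq_or_lt with hW0 | hW0
  · have h0 : ∀ j, w j = 0 := fun j =>
      (Finset.sum_eq_zero_iff_of_nonneg (fun j _ => hw j)).mp hW0.symm j (mem_univ j)
    simp [h0, Real.zero_rpow hprne]
  · set W := ∑ j, w j with hWdef
    have key := Real.rpow_arith_mean_le_arith_mean_rpow Finset.univ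
      (fun j => w j / W) x (fun j _ => div_nonneg (hw j) hW) ?_ (fun j _ => hx j) hpr
    · have hL : (∑ j, w j / W * x j) = (∑ j, w j * x j) / W := by
        simp only [div_mul_eq_mul_div]
        rw [← Finset.sum_div]
      have hR : (∑ j, w j / W * x j ^ pr) = (∑ j, w j * x j ^ pr) / W := by
        simp only [div_mul_eq_mul_div]
        rw [← Finset.sum_div]
      rw [hL, hR] at key
      have hnum : 0 ≤ ∑ j, w j * x j :=
        Finset.sum_nonneg fun j _ => mul_nonneg (hw j) (hx j)
      rw [Real.div_rpow hnum hW] at key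
      have hWpr : 0 < W ^ pr := Real.rpow_pos_of_pos hW0 pr
      have h2 : (∑ j, w j * x j) ^ pr ≤ W ^ pr * ((∑ j, w j * x j ^ pr) / W) := by
        rw [div_le_iff₀ hWpr] at key
        calc (∑ j, w j * x j) ^ pr ≤ (∑ j, w j * x j ^ pr) / W * W ^ pr := key
          _ = W ^ pr * ((∑ j, w j * x j ^ pr) / W) := by ring
      calc (∑ j, w j * x j) ^ pr ≤ W ^ pr * ((∑ j, w j * x j ^ pr) / W) := h2
        _ = W ^ pr / W * (∑ j, w j * x j ^ pr) := by ring
        _ = W ^ (pr - 1) * (∑ j, w j * x j ^ pr) := by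
            rw [Real.rpow_sub hW0, Real.rpow_one]
    · rw [← Finset.sum_div, div_self (ne_of_gt hW0)]

/-- absolute values of the entries of the softmax Jacobian -/
private noncomputable def aabs {n : ℕ} (s : Fin n → ℝ) (i j : Fin n) : ℝ :=
  if i = j then s i * (1 - s i) else s i * s j

variable {n : ℕ} {s : Fin n → ℝ}

private lemma s_le_one (hs0 : ∀ i, 0 ≤ s i) (hs1 : ∑ i, s i = 1) (i : Fin n) : s i ≤ 1 := by
  rw [← hs1]
  exact Finset.single_le_sum (fun j _ => hs0 j) (mem_univ i)

private lemma aabs_nonneg (hs0 : ∀ i, 0 ≤ s i) (hs1 : ∑ i, s i = 1) (i j : Fin n) :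
    0 ≤ aabs s i j := by
  unfold aabs
  split
  · exact mul_nonneg (hs0 i) (by linarith [s_le_one hs0 hs1 i])
  · exact mul_nonneg (hs0 i) (hs0 j)

private lemma aabs_symm (s : Fin n → ℝ) (i j : Fin n) : aabs s i j = aabs s j i := by
  unfold aabs
  rcases eq_or_ne i j with h | h
  · rw [h]
  · rw [if_neg h, if_neg (Ne.symm h), mul_comm]

private lemma abs_entry (hs0 : ∀ i, 0 ≤ s i) (hs1 : ∑ i, s i = 1) (i j : Fin n) :
    |softmaxJac s i j| = aabs s i j := by
  unfold softmaxJac aabs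
  rcases eq_or_ne i j with h | h
  · subst h
    simp [Matrix.diagonal, Matrix.vecMulVec, abs_of_nonneg,
      aabs_nonneg hs0 hs1 i i]
    rw [abs_of_nonneg]
    · ring
    · nlinarith [hs0 i, s_le_one hs0 hs1 i]
  · rw [Matrix.sub_apply, Matrix.diagonal_apply_ne _ h, Matrix.vecMulVec_apply, if_neg h,
      zero_sub, abs_neg, abs_of_nonneg (mul_nonneg (hs0 i) (hs0 j))]

private lemma row_sum (hs0 : ∀ i, 0 ≤ s i) (hs1 : ∑ i, s i = 1) (i : Fin n) :
    ∑ j, aabs s i j = 2 * s i * (1 - s i) := by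
  rw [← Finset.add_sum_erase _ _ (mem_univ i)]
  have h1 : ∑ j ∈ univ.erase i, aabs s i j = s i * (1 - s i) := by
    have : ∑ j ∈ univ.erase i, aabs s i j = ∑ j ∈ univ.erase i, s i * s j := by
      refine Finset.sum_congr rfl fun j hj => ?_
      rw [aabs, if_neg (Ne.symm (Finset.ne_of_mem_erase hj))]
    rw [this, ← Finset.mul_sum]
    have : ∑ j ∈ univ.erase i, s j = 1 - s i := by
      have := Finset.add_sum_erase univ s (mem_univ i)
      rw [hs1] at this
      linarith
    rw [this]
  rw [h1, aabs, if_pos rfl]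
  ring

private lemma col_sum (hs0 : ∀ i, 0 ≤ s i) (hs1 : ∑ i, s i = 1) (j : Fin n) :
    ∑ i, aabs s i j = 2 * s j * (1 - s j) := by
  rw [show (∑ i, aabs s i j) = ∑ i, aabs s j i from
    Finset.sum_congr rfl fun i _ => aabs_symm s i j]
  exact row_sum hs0 hs1 j

private lemma mulVec_abs_le (hs0 : ∀ i, 0 ≤ s i) (hs1 : ∑ i, s i = 1) (v : Fin n → ℝ)
    (i : Fin n) :
    |(softmaxJac s).mulVec v i| ≤ ∑ j, aabs s i j * |v j| := by
  rw [Matrix.mulVec, dotProduct]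
  refine (Finset.abs_sum_le_sum_abs _ _).trans ?_
  refine Finset.sum_le_sum fun j _ => ?_
  rw [abs_mul, abs_entry hs0 hs1]

/-- the coefficient `C j` -/
private noncomputable def Cc {n : ℕ} (s : Fin n → ℝ) (pr : ℝ) (j : Fin n) : ℝ :=
  ∑ i, (2 * s i * (1 - s i)) ^ (pr - 1) * aabs s i j

private lemma chain (hs0 : ∀ i, 0 ≤ s i) (hs1 : ∑ i, s i = 1)
    {pr : ℝ} (hpr : 1 ≤ pr) (v : Fin n → ℝ) :
    ∑ i, |(softmaxJac s).mulVec v i| ^ pr ≤ ∑ j, Cc s pr j * |v j| ^ pr := by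
  have step1 : ∀ i, |(softmaxJac s).mulVec v i| ^ pr ≤
      (2 * s i * (1 - s i)) ^ (pr - 1) * ∑ j, aabs s i j * |v j| ^ pr := by
    intro i
    calc |(softmaxJac s).mulVec v i| ^ pr
        ≤ (∑ j, aabs s i j * |v j|) ^ pr := by
          refine Real.rpow_le_rpow (abs_nonneg _) (mulVec_abs_le hs0 hs1 v i) (by linarith)
      _ ≤ (∑ j, aabs s i j) ^ (pr - 1) * ∑ j, aabs s i j * |v j| ^ pr :=
          jensen_aux _ _ (fun j => aabs_nonneg hs0 hs1 i j) (fun j => abs_nonneg _) hpr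
      _ = (2 * s i * (1 - s i)) ^ (pr - 1) * ∑ j, aabs s i j * |v j| ^ pr := by
          rw [row_sum hs0 hs1 i]
  calc ∑ i, |(softmaxJac s).mulVec v i| ^ pr
      ≤ ∑ i, (2 * s i * (1 - s i)) ^ (pr - 1) * ∑ j, aabs s i j * |v j| ^ pr :=
        Finset.sum_le_sum fun i _ => step1 i
    _ = ∑ j, Cc s pr j * |v j| ^ pr := by
        unfold Cc
        simp only [Finset.mul_sum, Finset.sum_mul]
        rw [Finset.sum_comm]
        exact Finset.sum_congr rfl fun j _ => Finset.sum_congr rfl fun i _ => by ring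

private lemma toReal_gt_one {p : ℝ≥0∞} (hp1 : 1 < p) (hp2 : p ≠ ⊤) : 1 < p.toReal := by
  rw [← ENNReal.toReal_one]
  exact (ENNReal.toReal_lt_toReal (by simp) hp2).mpr hp1

private lemma lp_pos {p : ℝ≥0∞} (hp1 : 1 < p) (hp2 : p ≠ ⊤) {v : Fin n → ℝ} (hv : v ≠ 0) :
    0 < lpNorm p v := by
  rw [lpNorm, if_neg hp2]
  apply Real.rpow_pos_of_pos
  obtain ⟨i, hi⟩ : ∃ i, v i ≠ 0 := by
    by_contra h
    push_neg at h
    exact hv (funext h)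
  refine Finset.sum_pos' (fun j _ => Real.rpow_nonneg (abs_nonneg _) _) ⟨i, mem_univ i, ?_⟩
  exact Real.rpow_pos_of_pos (abs_pos.mpr hi) _

private lemma lp_mul_le (hs0 : ∀ i, 0 ≤ s i) (hs1 : ∑ i, s i = 1)
    {p : ℝ≥0∞} (hp1 : 1 < p) (hp2 : p ≠ ⊤) {c : ℝ} (hc : 0 ≤ c)
    (hC : ∀ j, Cc s p.toReal j ≤ c ^ p.toReal) (v : Fin n → ℝ) :
    lpNorm p ((softmaxJac s).mulVec v) ≤ c * lpNorm p v := by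
  have hpr : 1 < p.toReal := toReal_gt_one hp1 hp2
  set pr := p.toReal
  have hprm : (0:ℝ) < pr := by linarith
  rw [lpNorm, lpNorm, if_neg hp2, if_neg hp2]
  have h1 : ∑ i, |(softmaxJac s).mulVec v i| ^ pr ≤ c ^ pr * ∑ j, |v j| ^ pr := by
    refine (chain hs0 hs1 (le_of_lt hpr) v).trans ?_
    rw [Finset.mul_sum]
    exact Finset.sum_le_sum fun j _ =>
      mul_le_mul_of_nonneg_right (hC j) (Real.rpow_nonneg (abs_nonneg _) _)
  calc (∑ i, |(softmaxJac s).mulVec v i| ^ pr) ^ (1/pr)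
      ≤ (c ^ pr * ∑ j, |v j| ^ pr) ^ (1/pr) := by
        refine Real.rpow_le_rpow ?_ h1 (by positivity)
        exact Finset.sum_nonneg fun i _ => Real.rpow_nonneg (abs_nonneg _) _
    _ = c * (∑ j, |v j| ^ pr) ^ (1/pr) := by
        rw [Real.mul_rpow (Real.rpow_nonneg hc _)
          (Finset.sum_nonneg fun j _ => Real.rpow_nonneg (abs_nonneg _) _)]
        congr 1
        rw [← Real.rpow_mul hc, mul_one_div, div_self (ne_of_gt hprm), Real.rpow_one]

private lemma opNorm_le_of_C_le (hn : 0 < n) (hs0 : ∀ i, 0 ≤ s i) (hs1 : ∑ i, s i = 1)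
    {p : ℝ≥0∞} (hp1 : 1 < p) (hp2 : p ≠ ⊤) {c : ℝ} (hc : 0 ≤ c)
    (hC : ∀ j, Cc s p.toReal j ≤ c ^ p.toReal) :
    opNorm p (softmaxJac s) ≤ c := by
  have : Nonempty {v : Fin n → ℝ // v ≠ 0} :=
    ⟨⟨fun _ => 1, by
      intro h
      have := congrFun h ⟨0, hn⟩
      simp at this⟩⟩
  refine ciSup_le ?_
  rintro ⟨v, hv⟩
  rw [div_le_iff₀ (lp_pos hp1 hp2 hv)]
  exact lp_mul_le hs0 hs1 hp1 hp2 hc hC v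

private lemma half_pow_split {pr : ℝ} : ((1:ℝ)/2) ^ (pr - 1) * (1/2) = (1/2) ^ pr := by
  rw [Real.rpow_sub (by norm_num : (0:ℝ) < 1/2), Real.rpow_one]
  field_simp

private lemma r_le_half (hs0 : ∀ i, 0 ≤ s i) (hs1 : ∑ i, s i = 1) (i : Fin n) :
    2 * s i * (1 - s i) ≤ 1/2 := by
  nlinarith [hs0 i, s_le_one hs0 hs1 i, sq_nonneg (2 * s i - 1)]

private lemma r_nonneg (hs0 : ∀ i, 0 ≤ s i) (hs1 : ∑ i, s i = 1) (i : Fin n) :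
    0 ≤ 2 * s i * (1 - s i) := by
  have := s_le_one hs0 hs1 i
  have := hs0 i
  nlinarith

private lemma Cc_nonneg (hs0 : ∀ i, 0 ≤ s i) (hs1 : ∑ i, s i = 1) (pr : ℝ) (j : Fin n) :
    0 ≤ Cc s pr j :=
  Finset.sum_nonneg fun i _ =>
    mul_nonneg (Real.rpow_nonneg (r_nonneg hs0 hs1 i) _) (aabs_nonneg hs0 hs1 i j)

private lemma Cc_le_col (hs0 : ∀ i, 0 ≤ s i) (hs1 : ∑ i, s i = 1)
    {pr : ℝ} (hpr : 1 < pr) (j : Fin n) :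
    Cc s pr j ≤ (1/2) ^ (pr - 1) * (2 * s j * (1 - s j)) := by
  unfold Cc
  rw [← col_sum hs0 hs1 j, Finset.mul_sum]
  refine Finset.sum_le_sum fun i _ => ?_
  refine mul_le_mul_of_nonneg_right ?_ (aabs_nonneg hs0 hs1 i j)
  exact Real.rpow_le_rpow (r_nonneg hs0 hs1 i) (r_le_half hs0 hs1 i) (by linarith)

private lemma Cc_le_general (hs0 : ∀ i, 0 ≤ s i) (hs1 : ∑ i, s i = 1)
    {pr : ℝ} (hpr : 1 < pr) (j : Fin n) :
    Cc s pr j ≤ (1/2) ^ pr := by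
  refine (Cc_le_col hs0 hs1 hpr j).trans ?_
  have h2 : (0:ℝ) < (1/2:ℝ) ^ (pr - 1) := Real.rpow_pos_of_pos (by norm_num) _
  calc (1/2:ℝ) ^ (pr-1) * (2 * s j * (1 - s j)) ≤ (1/2:ℝ) ^ (pr-1) * (1/2) :=
        mul_le_mul_of_nonneg_left (r_le_half hs0 hs1 j) h2.le
    _ = (1/2:ℝ) ^ pr := half_pow_split

private lemma Cc_lt_of_ne_half (hs0 : ∀ i, 0 ≤ s i) (hs1 : ∑ i, s i = 1)
    {pr : ℝ} (hpr : 1 < pr) {j : Fin n} (hj : s j ≠ 1/2) :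
    Cc s pr j < (1/2) ^ pr := by
  refine (Cc_le_col hs0 hs1 hpr j).trans_lt ?_
  have h2 : (0:ℝ) < (1/2:ℝ) ^ (pr - 1) := Real.rpow_pos_of_pos (by norm_num) _
  have hr : 2 * s j * (1 - s j) < 1/2 := by
    rcases lt_or_gt_of_ne hj with h | h
    · nlinarith [hs0 j, sq_nonneg (2 * s j - 1)]
    · nlinarith [s_le_one hs0 hs1 j, sq_nonneg (2 * s j - 1)]
  calc (1/2:ℝ) ^ (pr-1) * (2 * s j * (1 - s j)) < (1/2:ℝ) ^ (pr-1) * (1/2) :=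
        mul_lt_mul_of_pos_left hr h2
    _ = (1/2:ℝ) ^ pr := half_pow_split

private lemma Cc_lt_of_unique (hn : 2 < n) (hs0 : ∀ i, 0 ≤ s i) (hs1 : ∑ i, s i = 1)
    {pr : ℝ} (hpr : 1 < pr) {j : Fin n} (hj : s j = 1/2)
    (hother : ∀ i, i ≠ j → s i < 1/2) :
    Cc s pr j < (1/2) ^ pr := by
  have hne : (univ.erase j).Nonempty := by
    rw [← Finset.card_pos, Finset.card_erase_of_mem (mem_univ j), Finset.card_univ,
      Fintype.card_fin]
    omega
  set K := (univ.erase j).sup' hne (fun i => 2 * s i * (1 - s i)) with hK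
  have hK0 : 0 ≤ K := by
    obtain ⟨i0, hi0⟩ := hne
    exact (r_nonneg hs0 hs1 i0).trans (Finset.le_sup' (fun i => 2 * s i * (1 - s i)) hi0)
  have hKlt : K < 1/2 := by
    rw [Finset.sup'_lt_iff]
    intro i hi
    have hsi := hother i (Finset.ne_of_mem_erase hi)
    nlinarith [hs0 i]
  have hKpow : K ^ (pr - 1) < (1/2:ℝ) ^ (pr - 1) :=
    Real.rpow_lt_rpow hK0 hKlt (by linarith)
  have hsum_erase : ∑ i ∈ univ.erase j, s i = 1/2 := by
    have := Finset.add_sum_erase univ s (mem_univ j)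
    rw [hs1] at this
    linarith [hj ▸ this]
  unfold Cc
  rw [← Finset.add_sum_erase _ _ (mem_univ j)]
  have hdiag : (2 * s j * (1 - s j)) ^ (pr - 1) * aabs s j j = (1/2:ℝ)^(pr-1) * (1/4) := by
    rw [aabs, if_pos rfl, hj]
    norm_num
  have htail : ∑ i ∈ univ.erase j, (2 * s i * (1 - s i)) ^ (pr - 1) * aabs s i j
      ≤ K ^ (pr - 1) * (1/4) := by
    have : ∀ i ∈ univ.erase j, (2 * s i * (1 - s i)) ^ (pr - 1) * aabs s i j
        ≤ K ^ (pr - 1) * (s i * (1/2)) := by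
      intro i hi
      have hij : i ≠ j := Finset.ne_of_mem_erase hi
      rw [aabs, if_neg hij, hj]
      refine mul_le_mul ?_ (le_refl _) (mul_nonneg (hs0 i) (by norm_num)) ?_
      · exact Real.rpow_le_rpow (r_nonneg hs0 hs1 i)
          (Finset.le_sup' (fun i => 2 * s i * (1 - s i)) hi) (by linarith)
      · exact Real.rpow_nonneg hK0 _
    refine (Finset.sum_le_sum this).trans ?_
    rw [← Finset.mul_sum, ← Finset.sum_mul, hsum_erase]
    ring_nf
    exact le_refl _
  have h2 : (0:ℝ) < (1/2:ℝ) ^ (pr - 1) := Real.rpow_pos_of_pos (by norm_num) _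
  calc (2 * s j * (1 - s j)) ^ (pr - 1) * aabs s j j +
        ∑ i ∈ univ.erase j, (2 * s i * (1 - s i)) ^ (pr - 1) * aabs s i j
      ≤ (1/2:ℝ)^(pr-1) * (1/4) + K ^ (pr-1) * (1/4) := by
        rw [hdiag]
        exact add_le_add le_rfl htail
    _ < (1/2:ℝ)^(pr-1) * (1/2) := by nlinarith
    _ = (1/2:ℝ) ^ pr := half_pow_split

private lemma mulVec_witness {i j : Fin n} (hij : i ≠ j)
    (hi : s i = 1/2) (hj : s j = 1/2) :
    (softmaxJac s).mulVec (fun k => if k = i then 1 else if k = j then -1 else 0) =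
      fun k => (1/2) * (if k = i then 1 else if k = j then -1 else 0) := by
  funext k
  set v₀ : Fin n → ℝ := fun k => if k = i then 1 else if k = j then -1 else 0 with hv₀
  rw [Matrix.mulVec, dotProduct]
  have hsub : ∑ l, softmaxJac s k l * v₀ l = ∑ l ∈ ({i, j} : Finset (Fin n)),
      softmaxJac s k l * v₀ l := by
    refine (Finset.sum_subset (Finset.subset_univ _) ?_).symm
    intro l _ hl
    simp only [Finset.mem_insert, Finset.mem_singleton] at hl
    push_neg at hl
    have : v₀ l = 0 := by simp [hv₀, hl.1, hl.2]
    rw [this, mul_zero]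
  rw [hsub, Finset.sum_pair hij]
  have hvi : v₀ i = 1 := by simp [hv₀]
  have hvj : v₀ j = -1 := by simp [hv₀, hij.symm]
  rw [hvi, hvj]
  have hA : ∀ l : Fin n, softmaxJac s k l = (if k = l then s k else 0) - s k * s l := by
    intro l
    simp [softmaxJac, Matrix.vecMulVec_apply, Matrix.diagonal_apply]
  rw [hA i, hA j, hi, hj]
  rcases eq_or_ne k i with hki | hki
  · subst hki
    simp only [if_pos rfl, if_neg hij, hi]
    simp
  · rcases eq_or_ne k j with hkj | hkj
    · subst hkj
      simp only [if_neg hki, if_pos rfl, if_neg (Ne.symm hij), hj]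
      simp
      norm_num
    · simp only [if_neg hki, if_neg hkj]
      ring

end aux

/-- for n > 2 and 1 < p < ∞ and s in the closed simplex,
`‖Diag(s) - s sᵀ‖_p = 1/2` iff s is a permutation of (1/2, 1/2, 0, …, 0). -/
theorem opNorm_eq_half_iff_support_two {n : ℕ} (hn : 2 < n)
    (p : ℝ≥0∞) (hp1 : 1 < p) (hp2 : p ≠ ⊤)
    (s : Fin n → ℝ) (hs : s ∈ probSimplex n) :
    opNorm p (softmaxJac s) = 1 / 2 ↔
      ∃ i j : Fin n, i ≠ j ∧ s i = 1 / 2 ∧ s j = 1 / 2 ∧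
        ∀ k : Fin n, k ≠ i → k ≠ j → s k = 0 := by
  obtain ⟨hs0, hs1⟩ := hs
  have hpr : 1 < p.toReal := toReal_gt_one hp1 hp2
  set pr := p.toReal with hprdef
  have hn0 : 0 < n := by omega
  constructor
  · intro hop
    by_contra hbad
    push_neg at hbad
    have hCstrict : ∀ j, Cc s pr j < (1/2) ^ pr := by
      intro j
      by_cases hj : s j = 1/2
      · refine Cc_lt_of_unique hn hs0 hs1 hpr hj ?_
        intro i hij
        have hpairle : s i + s j ≤ 1 := by
          rw [← hs1, ← Finset.sum_pair hij]
          exact Finset.sum_le_sum_of_subset_of_nonneg (Finset.subset_univ _)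
            (fun k _ _ => hs0 k)
        have hle : s i ≤ 1/2 := by linarith [hj ▸ hpairle]
        rcases lt_or_eq_of_le hle with h | h
        · exact h
        · exfalso
          -- then s i = s j = 1/2 and all others are 0: contradiction with hbad
          have hzero : ∀ k, k ≠ i → k ≠ j → s k = 0 := by
            intro k hki hkj
            have hsub : ({i, j} : Finset (Fin n)) ⊆ Finset.univ := Finset.subset_univ _
            have hsumpair : ∑ l ∈ ({i, j} : Finset (Fin n)), s l = 1 := by
              rw [Finset.sum_pair hij, h, hj]
              norm_num
            have hrest : ∑ l ∈ Finset.univ \ ({i, j} : Finset (Fin n)), s l = 0 := by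
              rw [Finset.sum_sdiff_eq_sub hsub, hs1, hsumpair]
              ring
            have hk : k ∈ Finset.univ \ ({i, j} : Finset (Fin n)) := by
              simp [hki, hkj]
            exact (Finset.sum_eq_zero_iff_of_nonneg (fun l _ => hs0 l)).mp hrest k hk
          obtain ⟨k, hk⟩ := hbad i j hij h hj
          exact (hk.2.2 (hzero k hk.1 hk.2.1)).elim
      · exact Cc_lt_of_ne_half hs0 hs1 hpr hj
    have hneFin : (Finset.univ : Finset (Fin n)).Nonempty :=
      ⟨⟨0, hn0⟩, Finset.mem_univ _⟩
    set c' := Finset.univ.sup' hneFin (Cc s pr) with hc'def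
    have hc'0 : 0 ≤ c' := by
      obtain ⟨i0, hi0⟩ := hneFin
      exact (Cc_nonneg hs0 hs1 pr i0).trans (Finset.le_sup' (Cc s pr) hi0)
    have hc'lt : c' < (1/2) ^ pr := by
      rw [hc'def, Finset.sup'_lt_iff]
      exact fun j _ => hCstrict j
    have hprm : (0:ℝ) < pr := by linarith
    set c := c' ^ (1/pr) with hcdef
    have hc0 : 0 ≤ c := Real.rpow_nonneg hc'0 _
    have hcpr : c ^ pr = c' := by
      rw [hcdef, ← Real.rpow_mul hc'0, one_div_mul_cancel (ne_of_gt hprm), Real.rpow_one]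
    have hop_le : opNorm p (softmaxJac s) ≤ c := by
      refine opNorm_le_of_C_le hn0 hs0 hs1 hp1 hp2 hc0 ?_
      intro j
      rw [hcpr]
      exact Finset.le_sup' (Cc s pr) (Finset.mem_univ j)
    have hclt : c < 1/2 := by
      have h1 : c' ^ (1/pr) < ((1/2:ℝ) ^ pr) ^ (1/pr) :=
        Real.rpow_lt_rpow hc'0 hc'lt (by positivity)
      have h2 : ((1/2:ℝ) ^ pr) ^ (1/pr) = 1/2 := by
        rw [← Real.rpow_mul (by norm_num : (0:ℝ) ≤ 1/2), mul_one_div,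
          div_self (ne_of_gt hprm), Real.rpow_one]
      rw [hcdef]
      rw [h2] at h1
      exact h1
    linarith [hop ▸ hop_le]
  · rintro ⟨i, j, hij, hi, hj, -⟩
    set v₀ : Fin n → ℝ := fun k => if k = i then 1 else if k = j then -1 else 0 with hv₀
    have hv₀ne : v₀ ≠ 0 := by
      intro h
      have := congrFun h i
      simp [hv₀] at this
    have hT : ∑ k, |v₀ k| ^ pr = 2 := by
      have hsub : ∑ k, |v₀ k| ^ pr = ∑ k ∈ ({i, j} : Finset (Fin n)), |v₀ k| ^ pr := by
        refine (Finset.sum_subset (Finset.subset_univ _) ?_).symm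
        intro l _ hl
        simp only [Finset.mem_insert, Finset.mem_singleton] at hl
        push_neg at hl
        have : v₀ l = 0 := by simp [hv₀, hl.1, hl.2]
        rw [this, abs_zero, Real.zero_rpow (by linarith)]
      rw [hsub, Finset.sum_pair hij]
      have h1 : v₀ i = 1 := by simp [hv₀]
      have h2 : v₀ j = -1 := by simp [hv₀, hij.symm]
      rw [h1, h2]
      norm_num
    have hAv : ∑ k, |(softmaxJac s).mulVec v₀ k| ^ pr = (1/2:ℝ) ^ pr * 2 := by
      rw [mulVec_witness hij hi hj]
      have : ∀ k, |(1/2:ℝ) * v₀ k| ^ pr = (1/2:ℝ) ^ pr * |v₀ k| ^ pr := by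
        intro k
        rw [abs_mul, Real.mul_rpow (abs_nonneg _) (abs_nonneg _), abs_of_nonneg]
        norm_num
      rw [Finset.sum_congr rfl fun k _ => this k, ← Finset.mul_sum, hT]
    have hratio : lpNorm p ((softmaxJac s).mulVec v₀) / lpNorm p v₀ = 1/2 := by
      rw [lpNorm, lpNorm, if_neg hp2, if_neg hp2, hAv, hT]
      rw [Real.mul_rpow (Real.rpow_nonneg (by norm_num) _) (by norm_num)]
      rw [← Real.rpow_mul (by norm_num : (0:ℝ) ≤ 1/2), mul_one_div,
        div_self (by positivity : pr ≠ 0), Real.rpow_one]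
      rw [mul_div_assoc, div_self (by positivity : (2:ℝ) ^ (1/pr) ≠ 0), mul_one]
    have hbdd : BddAbove (Set.range fun v : {v : Fin n → ℝ // v ≠ 0} =>
        lpNorm p ((softmaxJac s).mulVec v.val) / lpNorm p v.val) := by
      refine ⟨1/2, ?_⟩
      rintro x ⟨⟨v, hv⟩, rfl⟩
      rw [div_le_iff₀ (lp_pos hp1 hp2 hv)]
      exact lp_mul_le hs0 hs1 hp1 hp2 (by norm_num)
        (fun j => Cc_le_general hs0 hs1 hpr j) v
    refine le_antisymm ?_ ?_
    · exact opNorm_le_of_C_le hn0 hs0 hs1 hp1 hp2 (by norm_num)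
        (fun j => Cc_le_general hs0 hs1 hpr j)
    · calc (1/2:ℝ) = lpNorm p ((softmaxJac s).mulVec v₀) / lpNorm p v₀ := hratio.symm
        _ ≤ opNorm p (softmaxJac s) := le_ciSup hbdd ⟨v₀, hv₀ne⟩
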